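/- Let X be a compact, locally connected, metrizable topological space and let G be a countable group acting by homeomorphisms on X such that the orbit space X/G is Hausdorff. Then there exists a G-invariant metric on X inducing the topology of X. -/

import Mathlib

open Metric Set Filter MulAction Topology Pointwise

private lemma uncountable_cantor : ¬ Countable (ℕ → Bool) := by
  intro h
  classical
  have hinj : Function.Injective (fun s : Set ℕ => fun n => decide (n ∈ s)) := by
    intro s t hst
    ext n
    have := congrFun hst n
    simpa [decide_eq_decide] using this
  haveI : Countable (Set ℕ) := hinj.countable
  obtain ⟨f, hf⟩ := (inferInstance : Countable (Set ℕ)).exists_injective_nat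
  exact Function.cantor_injective f hf

set_option linter.unusedSectionVars false

section Aux

variable {G X : Type*} [Group G] [Countable G] [MetricSpace X] [CompactSpace X]
  [MulAction G X] [ContinuousConstSMul G X]
  [T2Space (Quotient (MulAction.orbitRel G X))]

private lemma q_eq_iff (a b : X) :
    Quotient.mk (MulAction.orbitRel G X) a = Quotient.mk (MulAction.orbitRel G X) b ↔
      a ∈ MulAction.orbit G b := by
  rw [Quotient.eq]
  exact MulAction.orbitRel_apply

private lemma q_cont : Continuous (Quotient.mk (MulAction.orbitRel G X)) :=
  continuous_quot_mk

private lemma orbit_isClosed (x : X) : IsClosed (MulAction.orbit G x) := by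
  have h : MulAction.orbit G x
      = Quotient.mk (MulAction.orbitRel G X) ⁻¹' {Quotient.mk (MulAction.orbitRel G X) x} := by
    ext y
    rw [Set.mem_preimage, Set.mem_singleton_iff, q_eq_iff]
  rw [h]
  exact isClosed_singleton.preimage q_cont

private lemma accPt_smul {S : Set X} {z : X} (g : G) (hz : AccPt z (𝓟 S)) :
    AccPt (g • z) (𝓟 (g • S)) := by
  have h := hz.map (f := fun y : X => g • y)
    (continuous_const_smul g).continuousAt (MulAction.injective g)
  rwa [Filter.map_principal, Set.image_smul] at h

private lemma orbit_finite (x : X) : (MulAction.orbit G x).Finite := by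
  set S := MulAction.orbit G x with hSdef
  by_contra hfin
  have hinf : S.Infinite := hfin
  have hcount : S.Countable := Set.countable_range _
  have hclosed : IsClosed S := orbit_isClosed x
  obtain ⟨z, -, hz⟩ := hinf.exists_accPt_of_subset_isCompact isCompact_univ (Set.subset_univ S)
  have hzS : z ∈ S := by
    have hc : ClusterPt z (𝓟 S) := AccPt.clusterPt hz
    have := mem_closure_iff_clusterPt.mpr hc
    rwa [hclosed.closure_eq] at this
  obtain ⟨g, hg⟩ := hzS
  have hpre : Preperfect S := by
    intro y hyS
    obtain ⟨h, hh⟩ := hyS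
    have hacc := accPt_smul (h * g⁻¹) hz
    have h1 : (h * g⁻¹) • z = y := by
      rw [← hg, ← hh]
      simp [mul_smul]
    have h2 : (h * g⁻¹) • S = S := MulAction.smul_orbit _ _
    rwa [h1, h2] at hacc
  have hperf : Perfect S := ⟨hclosed, hpre⟩
  obtain ⟨f, hfr, -, hfi⟩ := hperf.exists_nat_bool_injection ⟨x, MulAction.mem_orbit_self x⟩
  have hrc : (Set.range f).Countable := hcount.mono hfr
  haveI : Countable (Set.range f) := hrc.to_subtype
  have hinj2 : Function.Injective (fun y : ℕ → Bool => (⟨f y, Set.mem_range_self y⟩ : Set.range f)) :=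
    fun a b hab => hfi (congrArg Subtype.val hab)
  exact uncountable_cantor hinj2.countable

end Aux

private lemma equicont {G X : Type*} [Group G] [Countable G] [MetricSpace X] [CompactSpace X]
    [LocallyConnectedSpace X] [MulAction G X] [ContinuousConstSMul G X]
    [T2Space (Quotient (MulAction.orbitRel G X))] (x : X) {ε : ℝ} (hε : 0 < ε) :
    ∃ U : Set X, IsOpen U ∧ x ∈ U ∧ ∀ a ∈ U, ∀ g : G, dist (g • a) (g • x) < ε := by
  classical
  have hS : (MulAction.orbit G x).Finite := orbit_finite x
  set S := MulAction.orbit G x with hSdef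
  obtain ⟨r, hr0, hrε, hsep⟩ : ∃ r : ℝ, 0 < r ∧ 2 * r ≤ ε ∧
      ∀ p ∈ S, ∀ p' ∈ S, p ≠ p' → 2 * r ≤ dist p p' := by
    set F := hS.toFinset with hF
    set P := (F ×ˢ F).filter (fun pq => pq.1 ≠ pq.2) with hP
    rcases P.eq_empty_or_nonempty with hPe | hPn
    · refine ⟨ε / 2, by linarith, by linarith, ?_⟩
      intro p hp p' hp' hne
      exfalso
      have hmem : (p, p') ∈ P := by
        rw [hP, Finset.mem_filter]
        exact ⟨Finset.mem_product.mpr ⟨hS.mem_toFinset.mpr hp, hS.mem_toFinset.mpr hp'⟩, hne⟩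
      rw [hPe] at hmem
      exact absurd hmem (Finset.notMem_empty _)
    · set m := (P.image fun pq => dist pq.1 pq.2).min' (hPn.image _) with hm
      have hm0 : 0 < m := by
        have hmem := Finset.min'_mem (P.image fun pq => dist pq.1 pq.2) (hPn.image _)
        rw [Finset.mem_image] at hmem
        obtain ⟨pq, hpq, hd⟩ := hmem
        rw [hP, Finset.mem_filter] at hpq
        rw [hm, ← hd]
        exact dist_pos.mpr hpq.2
      refine ⟨min (ε / 2) (m / 2), by positivity, ?_, ?_⟩
      · have := min_le_left (ε / 2) (m / 2); linarith
      · intro p hp p' hp' hne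
        have hmem : dist p p' ∈ P.image (fun pq : X × X => dist pq.1 pq.2) := by
          rw [Finset.mem_image]
          refine ⟨(p, p'), ?_, rfl⟩
          rw [hP, Finset.mem_filter]
          exact ⟨Finset.mem_product.mpr ⟨hS.mem_toFinset.mpr hp, hS.mem_toFinset.mpr hp'⟩, hne⟩
        have h1 : m ≤ dist p p' := Finset.min'_le _ _ hmem
        have h2 := min_le_right (ε / 2) (m / 2)
        linarith
  set W := ⋃ p ∈ S, Metric.ball p r with hW
  have hWopen : IsOpen W := isOpen_biUnion fun p _ => Metric.isOpen_ball
  have hSW : S ⊆ W := fun p hp => Set.mem_biUnion hp (Metric.mem_ball_self hr0)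
  set Q := Quotient.mk (MulAction.orbitRel G X) with hQ
  have hKclosed : IsClosed (Q '' Wᶜ) :=
    (hWopen.isClosed_compl.isCompact.image q_cont).isClosed
  set V := Q ⁻¹' (Q '' Wᶜ)ᶜ with hV
  have hVopen : IsOpen V := (hKclosed.isOpen_compl).preimage q_cont
  have hVsat : ∀ (g : G) (y : X), y ∈ V → g • y ∈ V := by
    intro g y hy
    have h : Q (g • y) = Q y := (q_eq_iff _ _).mpr (MulAction.mem_orbit _ g)
    rw [Set.mem_preimage] at hy ⊢
    rw [h]; exact hy
  have hxV : x ∈ V := by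
    rw [Set.mem_preimage, Set.mem_compl_iff]
    rintro ⟨y, hyW, hyx⟩
    exact hyW (hSW ((q_eq_iff y x).mp hyx))
  have hVW : V ⊆ W := by
    intro y hy
    by_contra hyW
    exact hy ⟨y, hyW, rfl⟩
  set C := connectedComponentIn V x with hC
  have hCopen : IsOpen C := hVopen.connectedComponentIn
  have hxC : x ∈ C := mem_connectedComponentIn hxV
  refine ⟨C, hCopen, hxC, ?_⟩
  intro a haC g
  have hTconn : IsPreconnected ((fun y : X => g • y) '' C) :=
    (isConnected_connectedComponentIn_iff.mpr hxV).isPreconnected.image _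
      (continuous_const_smul g).continuousOn
  have hTV : (fun y : X => g • y) '' C ⊆ V := by
    rintro _ ⟨y, hy, rfl⟩
    exact hVsat g y (connectedComponentIn_subset V x hy)
  have hgx : g • x ∈ (fun y : X => g • y) '' C := ⟨x, hxC, rfl⟩
  have hga : g • a ∈ (fun y : X => g • y) '' C := ⟨a, haC, rfl⟩
  obtain ⟨p, hpS, hpball⟩ : ∃ p ∈ S, g • x ∈ Metric.ball p r := by
    have h := hVW (hTV hgx)
    rw [hW, Set.mem_iUnion₂] at h
    simpa using h
  have hTsub : (fun y : X => g • y) '' C ⊆ Metric.ball p r := by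
    refine hTconn.subset_left_of_subset_union (v := ⋃ q ∈ S \ {p}, Metric.ball q r)
      Metric.isOpen_ball (isOpen_biUnion fun q _ => Metric.isOpen_ball) ?_ ?_
      ⟨g • x, hgx, hpball⟩
    · rw [Set.disjoint_left]
      rintro y hy1 hy2
      rw [Set.mem_iUnion₂] at hy2
      obtain ⟨q, hq, hy2⟩ := hy2
      obtain ⟨hqS, hqp⟩ : q ∈ S ∧ q ≠ p := ⟨hq.1, hq.2⟩
      
      have h1 : dist p q ≤ dist y p + dist y q := dist_triangle_left _ _ _
      rw [Metric.mem_ball] at hy1 hy2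
      have h2 := hsep p hpS q hqS (Ne.symm hqp)
      have h4 : dist q p = dist p q := dist_comm q p
      linarith
    · intro y hy
      obtain ⟨p', hp'S, hp'ball⟩ : ∃ p' ∈ S, y ∈ Metric.ball p' r := by
        have h := hVW (hTV hy)
        rw [hW, Set.mem_iUnion₂] at h
        simpa using h
      by_cases hpp : p' = p
      · exact Set.mem_union_left _ (hpp ▸ hp'ball)
      · exact Set.mem_union_right _ (Set.mem_biUnion ⟨hp'S, hpp⟩ hp'ball)
  have h1 := hTsub hgx
  have h2 := hTsub hga
  rw [Metric.mem_ball] at h1 h2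
  have h3 : dist (g • a) (g • x) ≤ dist (g • a) p + dist p (g • x) := dist_triangle _ _ _
  rw [dist_comm p (g • x)] at h3
  linarith

/-- A compact, locally connected, metrizable space with an action of a countable group
whose orbit space is Hausdorff admits an invariant metric inducing its topology. -/
theorem stmt16 {G X : Type*} [Group G] [Countable G] [TopologicalSpace X]
    [CompactSpace X] [LocallyConnectedSpace X] [TopologicalSpace.MetrizableSpace X]
    [MulAction G X] [ContinuousConstSMul G X]
    [T2Space (Quotient (MulAction.orbitRel G X))] :
    ∃ ρ : X → X → ℝ,
      (∀ a b : X, 0 ≤ ρ a b) ∧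
      (∀ a b : X, ρ a b = 0 ↔ a = b) ∧
      (∀ a b : X, ρ a b = ρ b a) ∧
      (∀ a b c : X, ρ a c ≤ ρ a b + ρ b c) ∧
      (∀ (g : G) (a b : X), ρ (g • a) (g • b) = ρ a b) ∧
      (∀ s : Set X, IsOpen s ↔ ∀ a ∈ s, ∃ ε > 0, {b : X | ρ a b < ε} ⊆ s) := by
  letI : MetricSpace X := TopologicalSpace.metrizableSpaceMetric X
  have hbdd : ∀ a b : X, BddAbove (Set.range fun g : G => dist (g • a) (g • b)) := by
    intro a b
    refine ⟨Metric.diam (Set.univ : Set X), ?_⟩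
    rintro v ⟨g, rfl⟩
    exact Metric.dist_le_diam_of_mem isCompact_univ.isBounded (Set.mem_univ _) (Set.mem_univ _)
  have hne : ∀ a b : X, (Set.range fun g : G => dist (g • a) (g • b)).Nonempty :=
    fun a b => ⟨_, ⟨1, rfl⟩⟩
  set ρ : X → X → ℝ := fun a b => sSup (Set.range fun g : G => dist (g • a) (g • b)) with hρ
  have hle : ∀ (a b : X) (g : G), dist (g • a) (g • b) ≤ ρ a b :=
    fun a b g => le_csSup (hbdd a b) ⟨g, rfl⟩
  have hub : ∀ (a b : X) (M : ℝ), (∀ g : G, dist (g • a) (g • b) ≤ M) → ρ a b ≤ M :=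
    fun a b M h => csSup_le (hne a b) (by rintro v ⟨g, rfl⟩; exact h g)
  have hdist_le : ∀ a b : X, dist a b ≤ ρ a b := by
    intro a b
    have h := hle a b 1
    rwa [one_smul, one_smul] at h
  have hnonneg : ∀ a b, 0 ≤ ρ a b := fun a b => le_trans dist_nonneg (hdist_le a b)
  refine ⟨ρ, hnonneg, ?_, ?_, ?_, ?_, ?_⟩
  · intro a b
    constructor
    · intro h
      have h2 := hdist_le a b
      rw [h] at h2
      exact dist_le_zero.mp h2
    · rintro rfl
      exact le_antisymm (hub a a 0 fun g => by simp) (hnonneg a a)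
  · intro a b
    have h : (fun g : G => dist (g • a) (g • b)) = fun g : G => dist (g • b) (g • a) :=
      funext fun g => dist_comm _ _
    simp only [hρ]
    rw [h]
  · intro a b c
    refine hub a c _ fun g => ?_
    calc dist (g • a) (g • c) ≤ dist (g • a) (g • b) + dist (g • b) (g • c) := dist_triangle _ _ _
    _ ≤ ρ a b + ρ b c := add_le_add (hle a b g) (hle b c g)
  · intro h a b
    have he : (Set.range fun g : G => dist (g • h • a) (g • h • b))
        = Set.range fun g : G => dist (g • a) (g • b) := by
      ext v
      constructor
      · rintro ⟨g, rfl⟩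
        exact ⟨g * h, by simp only [mul_smul]⟩
      · rintro ⟨g, rfl⟩
        exact ⟨g * h⁻¹, by simp only [mul_smul, inv_smul_smul]⟩
    simp only [hρ]
    rw [he]
  · intro s
    constructor
    · intro hs a ha
      obtain ⟨ε, hε0, hball⟩ := Metric.isOpen_iff.mp hs a ha
      refine ⟨ε, hε0, fun b hb => hball ?_⟩
      rw [Metric.mem_ball, dist_comm]
      exact lt_of_le_of_lt (hdist_le a b) hb
    · intro h
      rw [isOpen_iff_mem_nhds]
      intro a ha
      obtain ⟨ε, hε0, hball⟩ := h a ha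
      obtain ⟨U, hUopen, haU, hU⟩ := equicont (G := G) a (half_pos hε0)
      refine Filter.mem_of_superset (hUopen.mem_nhds haU) ?_
      intro b hb
      apply hball
      have hρab : ρ a b ≤ ε / 2 := by
        refine hub a b _ fun g => ?_
        have h2 := hU b hb g
        rw [dist_comm]
        exact le_of_lt h2
      have : ρ a b < ε := by linarith
      exact this
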